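/- Let A₁,…,A_m be subspaces of a finite-dimensional vector space U over a field, and let S_k = S_k(A₁,…,A_m). Then for every k ∈ [m], the discoordination of the images in the quotient is at most the original discoordination: DisCoord^{U/S_k}([A₁]_{S_k},…,[A_m]_{S_k}) ≤ DisCoord^U(A₁,…,A_m). -/

import Mathlib

/-- The discoordination of `X` with respect to the family `A`:
`Σ_i (dim A_i − |X ∩ A_i|)`. -/
noncomputable def disCoordX (𝔽 : Type*) [Field 𝔽] {U : Type*} [AddCommGroup U]
    [Module 𝔽 U] {m : ℕ} (X : Set U) (A : Fin m → Submodule 𝔽 U) : ℕ :=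
  ∑ i, (Module.finrank 𝔽 ↥(A i) - (X ∩ (A i : Set U)).ncard)

/-- The discoordination of the family `A₁, …, A_m`: the minimum of
`disCoordX` over all linearly independent subsets `X` of the ambient space. -/
noncomputable def DisCoord (𝔽 : Type*) [Field 𝔽] {U : Type*} [AddCommGroup U]
    [Module 𝔽 U] {m : ℕ} (A : Fin m → Submodule 𝔽 U) : ℕ :=
  sInf { n : ℕ | ∃ X : Set U, LinearIndependent 𝔽 (fun x : X => (x : U)) ∧
    n = disCoordX 𝔽 X A }

/-- `S_k(A₁,…,A_m)`: the span of all `k`-fold intersections of the `A_i`. -/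
noncomputable def interSpan (𝔽 : Type*) [Field 𝔽] {U : Type*} [AddCommGroup U]
    [Module 𝔽 U] {m : ℕ} (A : Fin m → Submodule 𝔽 U) (k : ℕ) : Submodule 𝔽 U :=
  ⨆ (s : Finset (Fin m)) (_ : s.card = k), ⨅ i ∈ s, A i

open Submodule Set Module

section Helpers

variable {𝔽 U : Type*} [Field 𝔽] [AddCommGroup U] [Module 𝔽 U] {m : ℕ}

open Classical in
private noncomputable def deg (A : Fin m → Submodule 𝔽 U) (x : U) : ℕ :=
  (Finset.univ.filter (fun i => x ∈ A i)).card

private lemma le_deg_of_mem_T {A : Fin m → Submodule 𝔽 U} {k : ℕ} {x : U}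
    (hx : x ∈ ⋃ (s : Finset (Fin m)), ⋃ (_ : s.card = k), ((⨅ i ∈ s, A i : Submodule 𝔽 U) : Set U)) :
    k ≤ deg A x := by
  classical
  simp only [Set.mem_iUnion] at hx
  obtain ⟨s, hs, hxs⟩ := hx
  rw [SetLike.mem_coe, Submodule.mem_iInf] at hxs
  rw [deg, ← hs]
  refine Finset.card_le_card fun i hi => ?_
  have := hxs i
  rw [Submodule.mem_iInf] at this
  simp only [Finset.mem_filter, Finset.mem_univ, true_and]
  exact this hi

private lemma mem_interSpan_of_le_deg {A : Fin m → Submodule 𝔽 U} {k : ℕ} {x : U}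
    (h : k ≤ deg A x) : x ∈ interSpan 𝔽 A k := by
  classical
  rw [deg] at h
  obtain ⟨s, hs_sub, hs_card⟩ := Finset.exists_subset_card_eq h
  have hxs : x ∈ (⨅ i ∈ s, A i : Submodule 𝔽 U) := by
    rw [Submodule.mem_iInf]
    intro i
    rw [Submodule.mem_iInf]
    intro hi
    have := hs_sub hi
    simp only [Finset.mem_filter] at this
    exact this.2
  exact Submodule.mem_iSup_of_mem s (Submodule.mem_iSup_of_mem hs_card hxs)

private lemma sum_ncard_inter_eq {𝔽 U : Type*} [Field 𝔽] [AddCommGroup U] [Module 𝔽 U]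
    {m : ℕ} (A : Fin m → Submodule 𝔽 U) (w : Finset U) :
    ∑ i, ((↑w : Set U) ∩ (A i : Set U)).ncard = ∑ x ∈ w, deg A x := by
  classical
  have h : ∀ i, ((↑w : Set U) ∩ (A i : Set U)).ncard
      = ∑ x ∈ w, if x ∈ A i then 1 else 0 := by
    intro i
    rw [← Finset.card_filter, ← Set.ncard_coe_finset]
    congr 1
    ext x
    simp
  simp_rw [h]
  rw [Finset.sum_comm]
  refine Finset.sum_congr rfl fun x _ => ?_
  rw [deg, Finset.card_filter]

private lemma ncard_le_finrank' {𝔽 U : Type*} [Field 𝔽] [AddCommGroup U] [Module 𝔽 U]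
    [FiniteDimensional 𝔽 U] {W : Set U} {P : Submodule 𝔽 U}
    (hli : LinearIndependent 𝔽 (fun x : W => (x : U))) (hWP : W ⊆ ↑P) :
    W.ncard ≤ finrank 𝔽 P := by
  have hfin : W.Finite := hli.setFinite
  have := hfin.fintype
  rw [Set.ncard_eq_toFinset_card', ← finrank_span_set_eq_card hli]
  exact Submodule.finrank_mono (span_le.mpr hWP)

private lemma sum_nat_sub_eq {m : ℕ} (f g : Fin m → ℕ) (h : ∀ i, g i ≤ f i) :
    ∑ i, (f i - g i) = ∑ i, f i - ∑ i, g i := by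
  have h1 : ∑ i, (f i - g i) + ∑ i, g i = ∑ i, f i := by
    rw [← Finset.sum_add_distrib]
    exact Finset.sum_congr rfl fun i _ => Nat.sub_add_cancel (h i)
  omega

end Helpers

/-- For every `k ∈ [m]`, the discoordination of the images
`[A₁]_{S_k}, …, [A_m]_{S_k}` in the quotient `U/S_k` is at most the discoordination of
`A₁, …, A_m` in `U`. -/
theorem disCoord_quotient_le {𝔽 U : Type*} [Field 𝔽] [AddCommGroup U] [Module 𝔽 U]
    [FiniteDimensional 𝔽 U] {m : ℕ} (A : Fin m → Submodule 𝔽 U)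
    (k : ℕ) (hk1 : 1 ≤ k) (hkm : k ≤ m) :
    DisCoord 𝔽 (fun i => (A i).map (interSpan 𝔽 A k).mkQ) ≤ DisCoord 𝔽 A := by
  classical
  set S : Submodule 𝔽 U := interSpan 𝔽 A k with hSdef
  set T : Set U :=
    ⋃ (s : Finset (Fin m)), ⋃ (_ : s.card = k), ((⨅ i ∈ s, A i : Submodule 𝔽 U) : Set U)
    with hTdef
  have hTS : T ⊆ (S : Set U) := fun x hx => mem_interSpan_of_le_deg (le_deg_of_mem_T hx)
  have hne : { n : ℕ | ∃ X : Set U, LinearIndependent 𝔽 (fun x : X => (x : U)) ∧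
      n = disCoordX 𝔽 X A }.Nonempty :=
    ⟨disCoordX 𝔽 (∅ : Set U) A, ⟨∅, linearIndependent_empty 𝔽 U, rfl⟩⟩
  obtain ⟨X, hXli, hXeq⟩ : DisCoord 𝔽 A ∈ { n : ℕ | ∃ X : Set U,
      LinearIndependent 𝔽 (fun x : X => (x : U)) ∧ n = disCoordX 𝔽 X A } := Nat.sInf_mem hne
  suffices h : ∃ Y : Set (U ⧸ S), LinearIndependent 𝔽 (fun y : Y => (y : U ⧸ S)) ∧
      disCoordX 𝔽 Y (fun i => (A i).map S.mkQ) ≤ disCoordX 𝔽 X A by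
    obtain ⟨Y, hYli, hYle⟩ := h
    calc DisCoord 𝔽 (fun i => (A i).map S.mkQ)
        ≤ disCoordX 𝔽 Y (fun i => (A i).map S.mkQ) := Nat.sInf_le ⟨Y, hYli, rfl⟩
      _ ≤ disCoordX 𝔽 X A := hYle
      _ = DisCoord 𝔽 A := hXeq.symm
  -- construct B : basis of S containing X ∩ S, other elements from T
  have hXfin : X.Finite := hXli.setFinite
  have hliXS : LinearIndependent 𝔽 (fun x : ↥(X ∩ ↑S) => (x : U)) :=
    LinearIndepOn.mono (v := id) hXli Set.inter_subset_left
  obtain ⟨B, hBsub, hXSB, hspanB, hBli⟩ :=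
    exists_linearIndepOn_id_extension hliXS
      (Set.subset_union_left : X ∩ ↑S ⊆ (X ∩ ↑S) ∪ T)
  have hBfin : B.Finite := LinearIndependent.setFinite hBli
  have hBS : B ⊆ (S : Set U) := fun x hx => (hBsub hx).elim (fun h => h.2) (fun h => hTS h)
  have hSspanB : Submodule.span 𝔽 B = S := by
    refine le_antisymm (Submodule.span_le.mpr hBS) ?_
    rw [hSdef, interSpan]
    refine iSup_le fun s => iSup_le fun hs => fun x hx => ?_
    refine hspanB (Or.inr ?_)
    rw [hTdef]
    simp only [Set.mem_iUnion]
    exact ⟨s, hs, hx⟩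
  -- extend B by elements of X
  obtain ⟨E, hEsub, hBE, hspanE, hEli⟩ :=
    exists_linearIndepOn_id_extension hBli (Set.subset_union_left : B ⊆ B ∪ X)
  have hEfin : E.Finite := LinearIndependent.setFinite hEli
  set X'' : Set U := E \ B with hX''def
  have hX''E : X'' ⊆ E := Set.diff_subset
  have hX''fin : X''.Finite := hEfin.subset hX''E
  have hX''X : X'' ⊆ X := fun x hx => (hEsub hx.1).resolve_left hx.2
  have hX''li : LinearIndependent 𝔽 (fun x : X'' => (x : U)) := hEli.mono hX''E
  -- disjointness of span X'' and S
  have hdisj : Disjoint (Submodule.span 𝔽 X'') S := by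
    have hd : Disjoint ((Subtype.val : E → U) ⁻¹' X'') ((Subtype.val : E → U) ⁻¹' B) :=
      Set.disjoint_left.mpr fun a ha hb => ha.2 hb
    have h := LinearIndependent.disjoint_span_image (v := fun x : E => (x : U)) hEli hd
    rw [Set.image_preimage_eq_inter_range, Set.image_preimage_eq_inter_range,
      Subtype.range_coe, Set.inter_eq_self_of_subset_left hX''E,
      Set.inter_eq_self_of_subset_left hBE, hSspanB] at h
    exact h
  -- the quotient set Y
  set Y : Set (U ⧸ S) := S.mkQ '' X'' with hYdef
  have hYfin : Y.Finite := hX''fin.image _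
  have hYli : LinearIndependent 𝔽 (fun y : Y => (y : U ⧸ S)) := by
    refine LinearIndepOn.image (f := S.mkQ) hX''li ?_
    rw [Submodule.ker_mkQ]
    exact hdisj
  have hinjOn : Set.InjOn S.mkQ X'' := by
    intro x hx y hy hxy
    have h1 : x - y ∈ S := by
      rw [← Submodule.ker_mkQ S, LinearMap.mem_ker, map_sub, sub_eq_zero]
      exact hxy
    have h2 : x - y ∈ Submodule.span 𝔽 X'' :=
      sub_mem (Submodule.subset_span hx) (Submodule.subset_span hy)
    have h0 := (Submodule.disjoint_def.mp hdisj) _ h2 h1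
    exact sub_eq_zero.mp h0
  refine ⟨Y, hYli, ?_⟩
  -- per-index dimension facts
  have hF6 : ∀ i, finrank 𝔽 ((A i).map S.mkQ) + finrank 𝔽 ↥(A i ⊓ S) ≤ finrank 𝔽 ↥(A i) := by
    intro i
    set f : ↥(A i) →ₗ[𝔽] U ⧸ S := S.mkQ ∘ₗ (A i).subtype with hf
    have hrange : LinearMap.range f = (A i).map S.mkQ := by
      rw [hf, LinearMap.range_comp, Submodule.range_subtype]
    have hker : LinearMap.ker f = Submodule.comap (A i).subtype S := by
      rw [hf, LinearMap.ker_comp, Submodule.ker_mkQ]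
    have h1 := LinearMap.finrank_range_add_finrank_ker f
    rw [hrange, hker] at h1
    have h2 : finrank 𝔽 ↥(A i ⊓ S) ≤ finrank 𝔽 ↥(Submodule.comap (A i).subtype S) := by
      rw [← Submodule.map_comap_subtype]
      exact Submodule.finrank_map_le _ _
    omega
  have hF5 : ∀ i, finrank 𝔽 ↥(A i ⊓ S) + (X'' ∩ ↑(A i)).ncard ≤ finrank 𝔽 ↥(A i) := by
    intro i
    have hsfin : (X'' ∩ ↑(A i)).Finite := hX''fin.subset Set.inter_subset_left
    have := hsfin.fintype
    have hli2 : LinearIndependent 𝔽 (fun x : ↥(X'' ∩ ↑(A i)) => (x : U)) :=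
      LinearIndepOn.mono (v := id) hX''li Set.inter_subset_left
    have hq : finrank 𝔽 ↥(Submodule.span 𝔽 (X'' ∩ ↑(A i))) = (X'' ∩ ↑(A i)).ncard := by
      rw [finrank_span_set_eq_card hli2, Set.ncard_eq_toFinset_card']
    have hdisj2 : (A i ⊓ S) ⊓ Submodule.span 𝔽 (X'' ∩ ↑(A i)) = ⊥ := by
      refine disjoint_iff.mp ?_
      exact Disjoint.mono inf_le_right (Submodule.span_mono Set.inter_subset_left) hdisj.symm
    have hsum := Submodule.finrank_sup_add_finrank_inf_eq (A i ⊓ S)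
      (Submodule.span 𝔽 (X'' ∩ ↑(A i)))
    rw [hdisj2, finrank_bot, add_zero] at hsum
    have hle : (A i ⊓ S) ⊔ Submodule.span 𝔽 (X'' ∩ ↑(A i)) ≤ A i :=
      sup_le inf_le_left (Submodule.span_le.mpr Set.inter_subset_right)
    have := Submodule.finrank_mono hle
    omega
  have hF3 : ∀ i, (X ∩ ↑(A i)).ncard ≤ finrank 𝔽 ↥(A i) := fun i =>
    ncard_le_finrank' (LinearIndepOn.mono (v := id) hXli Set.inter_subset_left) Set.inter_subset_right
  have hF4 : ∀ i, (B ∩ ↑(A i)).ncard ≤ finrank 𝔽 ↥(A i ⊓ S) := fun i =>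
    ncard_le_finrank' (hBli.mono Set.inter_subset_left)
      (fun x hx => Submodule.mem_inf.mpr ⟨hx.2, hBS hx.1⟩)
  have hsub : ∀ i, (X'' ∩ ↑(A i)).ncard ≤ (Y ∩ ↑((A i).map S.mkQ)).ncard := by
    intro i
    have himg : S.mkQ '' (X'' ∩ ↑(A i)) ⊆ Y ∩ ↑((A i).map S.mkQ) := by
      rintro _ ⟨x, ⟨hx1, hx2⟩, rfl⟩
      exact ⟨⟨x, hx1, rfl⟩, Submodule.mem_map_of_mem hx2⟩
    calc (X'' ∩ ↑(A i)).ncard = (S.mkQ '' (X'' ∩ ↑(A i))).ncard :=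
          (Set.ncard_image_of_injOn (hinjOn.mono Set.inter_subset_left)).symm
      _ ≤ _ := Set.ncard_le_ncard himg (hYfin.subset Set.inter_subset_left)
  -- the key counting inequality
  have hcount : ∀ (W : Set U) (hW : W.Finite),
      ∑ i, (W ∩ ↑(A i)).ncard = ∑ x ∈ hW.toFinset, deg A x := by
    intro W hW
    have := sum_ncard_inter_eq A hW.toFinset
    rwa [hW.coe_toFinset] at this
  set R : Set U := X \ X'' with hRdef
  have hRfin : R.Finite := hXfin.subset Set.diff_subset
  have hRS : R ∩ ↑S = X ∩ ↑S := by
    ext x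
    constructor
    · rintro ⟨hx, hxS⟩; exact ⟨hx.1, hxS⟩
    · rintro ⟨hx, hxS⟩
      have hxB : x ∈ B := hXSB ⟨hx, hxS⟩
      exact ⟨⟨hx, fun hx'' => hx''.2 hxB⟩, hxS⟩
  have key : ∑ i, (X ∩ ↑(A i)).ncard
      ≤ ∑ i, (finrank 𝔽 ↥(A i ⊓ S) + (X'' ∩ ↑(A i)).ncard) := by
    rw [Finset.sum_add_distrib]
    have hX : ∑ i, (X ∩ ↑(A i)).ncard = ∑ x ∈ hXfin.toFinset, deg A x := hcount X hXfin
    have hX'' : ∑ i, (X'' ∩ ↑(A i)).ncard = ∑ x ∈ hX''fin.toFinset, deg A x := hcount X'' hX''fin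
    have hBc : ∑ x ∈ hBfin.toFinset, deg A x ≤ ∑ i, finrank 𝔽 ↥(A i ⊓ S) := by
      rw [← hcount B hBfin]
      exact Finset.sum_le_sum fun i _ => hF4 i
    have hsplit : ∑ x ∈ hXfin.toFinset, deg A x
        = ∑ x ∈ hX''fin.toFinset, deg A x + ∑ x ∈ hRfin.toFinset, deg A x := by
      have hdisjF : Disjoint hX''fin.toFinset hRfin.toFinset := by
        refine Finset.disjoint_left.mpr fun x hx1 hx2 => ?_
        rw [Set.Finite.mem_toFinset] at hx1 hx2
        exact hx2.2 hx1
      rw [← Finset.sum_union hdisjF]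
      refine Finset.sum_congr ?_ fun _ _ => rfl
      ext x
      simp only [Set.Finite.mem_toFinset, Finset.mem_union]
      constructor
      · intro hx
        by_cases hx'' : x ∈ X''
        · exact Or.inl hx''
        · exact Or.inr ⟨hx, hx''⟩
      · rintro (hx | hx)
        · exact hX''X hx
        · exact hx.1
    have hcore : ∑ x ∈ hRfin.toFinset, deg A x ≤ ∑ x ∈ hBfin.toFinset, deg A x := by
      set fR := hRfin.toFinset with hfR
      set fB := hBfin.toFinset with hfB
      set fRS := fR.filter (fun x => x ∈ (S : Set U)) with hfRS
      have hfRSB : fRS ⊆ fB := by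
        intro x hx
        rw [hfRS, Finset.mem_filter, hfR, Set.Finite.mem_toFinset] at hx
        rw [hfB, Set.Finite.mem_toFinset]
        exact hXSB ⟨hx.1.1, hx.2⟩
      have h1 : ∑ x ∈ fRS, deg A x + ∑ x ∈ fR.filter (fun x => ¬ x ∈ (S : Set U)), deg A x
          = ∑ x ∈ fR, deg A x := Finset.sum_filter_add_sum_filter_not _ _ _
      have h2 : ∑ x ∈ fB \ fRS, deg A x + ∑ x ∈ fRS, deg A x = ∑ x ∈ fB, deg A x :=
        Finset.sum_sdiff hfRSB
      have h3 : ∑ x ∈ fR.filter (fun x => ¬ x ∈ (S : Set U)), deg A x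
          ≤ (fR.filter (fun x => ¬ x ∈ (S : Set U))).card • k := by
        refine Finset.sum_le_card_nsmul _ _ k ?_
        intro x hx
        rw [Finset.mem_filter] at hx
        by_contra hcon
        push_neg at hcon
        exact hx.2 (mem_interSpan_of_le_deg (le_of_lt hcon))
      have h4 : (fB \ fRS).card • k ≤ ∑ x ∈ fB \ fRS, deg A x := by
        refine Finset.card_nsmul_le_sum _ _ k ?_
        intro x hx
        rw [Finset.mem_sdiff] at hx
        have hxB : x ∈ B := by
          have := hx.1
          rwa [hfB, Set.Finite.mem_toFinset] at this
        have hxT : x ∈ T := by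
          rcases hBsub hxB with h | h
          · exfalso
            apply hx.2
            rw [hfRS, Finset.mem_filter, hfR, Set.Finite.mem_toFinset]
            exact ⟨⟨h.1, fun hxx => hxx.2 hxB⟩, h.2⟩
          · exact h
        exact le_deg_of_mem_T hxT
      have h5 : (fR.filter (fun x => ¬ x ∈ (S : Set U))).card ≤ (fB \ fRS).card := by
        have e0 : fRS.card ≤ fR.card := by
          rw [hfRS]; exact Finset.card_filter_le _ _
        have e1 : (fR.filter (fun x => x ∈ (S : Set U))).card
            + (fR.filter (fun x => ¬ x ∈ (S : Set U))).card = fR.card :=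
          Finset.card_filter_add_card_filter_not _
        have e2 : (fB \ fRS).card = fB.card - fRS.card := Finset.card_sdiff_of_subset hfRSB
        have e3 : fR.card ≤ fB.card := by
          have hRcard : fR.card = R.ncard := (Set.ncard_eq_toFinset_card R hRfin).symm
          have hBcard : fB.card = B.ncard := (Set.ncard_eq_toFinset_card B hBfin).symm
          have hRX : R.ncard = X.ncard - X''.ncard := Set.ncard_diff hX''X hX''fin
          have hXE : X.ncard ≤ E.ncard := by
            have h6 : X ⊆ ↑(Submodule.span 𝔽 E) := fun x hx => hspanE (Or.inr hx)
            have := hEfin.fintype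
            have h7 : finrank 𝔽 ↥(Submodule.span 𝔽 E) = E.ncard := by
              rw [finrank_span_set_eq_card hEli, Set.ncard_eq_toFinset_card']
            rw [← h7]
            exact ncard_le_finrank' hXli h6
          have hEcard : X''.ncard + B.ncard = E.ncard := by
            rw [hX''def]
            exact Set.ncard_diff_add_ncard_of_subset hBE hEfin
          have hX''X' : X''.ncard ≤ X.ncard := Set.ncard_le_ncard hX''X hXfin
          omega
        rw [← hfRS] at e1
        omega
      have h6 := Nat.mul_le_mul_right k h5
      simp only [smul_eq_mul] at h3 h4
      omega
    omega
  -- final assembly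
  rw [disCoordX, disCoordX]
  calc ∑ i, (finrank 𝔽 ↥((A i).map S.mkQ) - (Y ∩ ↑((A i).map S.mkQ)).ncard)
      ≤ ∑ i, (finrank 𝔽 ↥(A i) - (finrank 𝔽 ↥(A i ⊓ S) + (X'' ∩ ↑(A i)).ncard)) := by
        refine Finset.sum_le_sum fun i _ => ?_
        have h1 : finrank 𝔽 ↥((A i).map S.mkQ) ≤ finrank 𝔽 ↥(A i) - finrank 𝔽 ↥(A i ⊓ S) :=
          Nat.le_sub_of_add_le (hF6 i)
        calc finrank 𝔽 ↥((A i).map S.mkQ) - (Y ∩ ↑((A i).map S.mkQ)).ncard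
            ≤ (finrank 𝔽 ↥(A i) - finrank 𝔽 ↥(A i ⊓ S)) - (X'' ∩ ↑(A i)).ncard :=
              tsub_le_tsub h1 (hsub i)
          _ = _ := by rw [Nat.sub_sub]
    _ = ∑ i, finrank 𝔽 ↥(A i) - ∑ i, (finrank 𝔽 ↥(A i ⊓ S) + (X'' ∩ ↑(A i)).ncard) :=
        sum_nat_sub_eq _ _ hF5
    _ ≤ ∑ i, finrank 𝔽 ↥(A i) - ∑ i, (X ∩ ↑(A i)).ncard := Nat.sub_le_sub_left key _
    _ = ∑ i, (finrank 𝔽 ↥(A i) - (X ∩ ↑(A i)).ncard) := (sum_nat_sub_eq _ _ hF3).symm
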